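/- Suppose u : ℝ³ → ℝ is a positive continuous function such that for every x ∈ ℝ³ and every λ > 0, u(y) ≥ (λ/|y - x|) u(x + λ²(y - x)/|y - x|²) for all y with |y - x| ≥ λ. Then u is constant. -/

import Mathlib

/-- a positive continuous function on `ℝ³` dominating all its
Kelvin transforms `u^{λ,x}` outside the corresponding balls is constant. -/
theorem dominating_all_kelvin_transforms_implies_constant
    (u : EuclideanSpace ℝ (Fin 3) → ℝ)
    (hu_pos : ∀ x, 0 < u x) (hu_cont : Continuous u)
    (hdom : ∀ (x : EuclideanSpace ℝ (Fin 3)) (lam : ℝ), 0 < lam →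
      ∀ y : EuclideanSpace ℝ (Fin 3), lam ≤ ‖y - x‖ →
        (lam / ‖y - x‖) * u (x + (lam ^ 2 / ‖y - x‖ ^ 2) • (y - x)) ≤ u y) :
    ∃ c : ℝ, ∀ y, u y = c := by
  have key : ∀ y z : EuclideanSpace ℝ (Fin 3), u z ≤ u y := by
    intro y z
    by_cases hyz : y = z
    · rw [hyz]
    set d := y - z with hd
    set m := ‖d‖ with hmdef
    have hm : 0 < m := by
      rw [hmdef, hd, norm_pos_iff]
      exact sub_ne_zero.mpr hyz
    have main : ∀ s : ℝ, 0 < s → Real.sqrt (s / (m + s)) * u z ≤ u y := by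
      intro s hs
      have hms : 0 < m + s := by positivity
      set x := z - (s / m) • d with hx
      have hco : (m + s) / m = 1 + s / m := by field_simp
      have hyx : y - x = ((m + s) / m) • d := by
        rw [hco, add_smul, one_smul, hx, hd]
        abel
      have hnyx : ‖y - x‖ = m + s := by
        rw [hyx, norm_smul, Real.norm_eq_abs, abs_of_pos (by positivity), ← hmdef]
        field_simp
      set lam := Real.sqrt (s * (m + s)) with hlam
      have hlam_pos : 0 < lam := Real.sqrt_pos.mpr (by positivity)
      have hlam_le : lam ≤ m + s := by
        calc lam ≤ Real.sqrt ((m + s) * (m + s)) := by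
              apply Real.sqrt_le_sqrt
              apply mul_le_mul_of_nonneg_right _ hms.le
              linarith
          _ = m + s := Real.sqrt_mul_self hms.le
      have hlamsq : lam ^ 2 = s * (m + s) := Real.sq_sqrt (by positivity)
      have hpoint : x + (lam ^ 2 / ‖y - x‖ ^ 2) • (y - x) = z := by
        rw [hnyx, hlamsq, hyx, smul_smul]
        have : s * (m + s) / (m + s) ^ 2 * ((m + s) / m) = s / m := by
          field_simp
        rw [this, hx]
        abel
      have := hdom x lam hlam_pos y (by rw [hnyx]; exact hlam_le)
      rw [hpoint, hnyx] at this
      have hfac : Real.sqrt (s / (m + s)) = lam / (m + s) := by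
        rw [eq_div_iff hms.ne', hlam, ← Real.sqrt_sq hms.le,
          ← Real.sqrt_mul (by positivity)]
        congr 1
        field_simp
        ring
        exact (Real.sq_sqrt (by nlinarith)).symm
      rw [hfac]
      exact this
    have h0 : Filter.Tendsto (fun s : ℝ => m / (m + s)) Filter.atTop (nhds 0) :=
      Filter.Tendsto.div_atTop tendsto_const_nhds
        (Filter.tendsto_atTop_add_const_left _ m Filter.tendsto_id)
    have h1 : Filter.Tendsto (fun s : ℝ => s / (m + s)) Filter.atTop (nhds 1) := by
      have heq : (fun s : ℝ => 1 - m / (m + s)) =ᶠ[Filter.atTop]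
          fun s : ℝ => s / (m + s) := by
        filter_upwards [Filter.eventually_gt_atTop 0] with s hs
        have hms : (m + s) ≠ 0 := by positivity
        field_simp
        ring
      have := (tendsto_const_nhds.sub h0).congr' heq
      simpa using this
    have h2 : Filter.Tendsto (fun s : ℝ => Real.sqrt (s / (m + s)) * u z)
        Filter.atTop (nhds (u z)) := by
      have := ((Real.continuous_sqrt.tendsto 1).comp h1).mul_const (u z)
      simpa using this
    exact le_of_tendsto h2 (Filter.eventually_atTop.2
      ⟨1, fun s hs => main s (lt_of_lt_of_le zero_lt_one hs)⟩)
  exact ⟨u 0, fun y => le_antisymm (key 0 y) (key y 0)⟩
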